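/- arXiv:2604.03779 — 2 statements merged into one kernel-verified Lean document; each statement's English description precedes it below -/
import Mathlib

section
/- Let n ∈ ℕ, let p_t, p_s ∈ [0,1] with p_t < 1, let σ ∈ [0,1], and set β = (p_s - (1-σ)·p_t)/(1 - p_t); assume β ∈ [0,1]. If X ~ Binomial(n, p_t), and conditionally on X = x one draws independently N ~ Binomial(x, 1-σ) and B ~ Binomial(n - x, β), then N + B ~ Binomial(n, p_s). -/
/-- The binomial probability mass function `b(n,p,k) = C(n,k)·p^k·(1-p)^(n-k)`. -/
def binomialPMF (n : ℕ) (p : ℝ) (k : ℕ) : ℝ :=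
  (n.choose k : ℝ) * p ^ k * (1 - p) ^ (n - k)

open Polynomial in
lemma coeff_binPoly (m : ℕ) (p : ℝ) (k : ℕ) :
    ((C p * X + C (1 - p)) ^ m).coeff k = binomialPMF m p k := by
  rw [add_pow, finset_sum_coeff]
  have h : ∀ i ∈ Finset.range (m+1),
      ((C p * X) ^ i * (C (1-p)) ^ (m - i) * (m.choose i : Polynomial ℝ)).coeff k
      = if k = i then (m.choose i : ℝ) * p ^ i * (1-p) ^ (m-i) else 0 := by
    intro i _
    have : ((C p * X) ^ i * (C (1-p)) ^ (m - i) * (m.choose i : Polynomial ℝ))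
        = C ((m.choose i : ℝ) * p ^ i * (1-p) ^ (m-i)) * X ^ i := by
      rw [mul_pow, ← C_pow, ← C_pow, ← C_eq_natCast]
      rw [C_mul, C_mul]
      ring
    rw [this, coeff_C_mul, coeff_X_pow]
    simp [mul_ite]
  rw [Finset.sum_congr rfl h, Finset.sum_ite_eq (Finset.range (m+1)) k]
  by_cases hk : k ∈ Finset.range (m+1)
  · simp [hk, binomialPMF]
  · simp only [hk, if_false]
    simp only [Finset.mem_range, not_lt] at hk
    have : m.choose k = 0 := Nat.choose_eq_zero_of_lt (by omega)
    simp [binomialPMF, this]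

open Polynomial in
lemma key (n : ℕ) (pt a b : ℝ) (k : ℕ) :
    ∑ x ∈ Finset.range (n + 1), binomialPMF n pt x *
        ∑ j ∈ Finset.range (k + 1), binomialPMF x a j * binomialPMF (n - x) b (k - j)
      = binomialPMF n (pt * a + (1 - pt) * b) k := by
  set Pa : Polynomial ℝ := C a * X + C (1 - a) with hPa
  set Pb : Polynomial ℝ := C b * X + C (1 - b) with hPb
  have hmul : ∀ x, (∑ j ∈ Finset.range (k + 1),
      binomialPMF x a j * binomialPMF (n - x) b (k - j))
      = (Pa ^ x * Pb ^ (n - x)).coeff k := by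
    intro x
    rw [coeff_mul, Finset.Nat.sum_antidiagonal_eq_sum_range_succ_mk]
    refine Finset.sum_congr rfl (fun j _ => ?_)
    rw [hPa, hPb, coeff_binPoly, coeff_binPoly]
  have hps : (C (pt * a + (1 - pt) * b) * X + C (1 - (pt * a + (1 - pt) * b)) : Polynomial ℝ)
      = C pt * Pa + C (1 - pt) * Pb := by
    rw [hPa, hPb]
    simp only [map_mul, map_add, map_sub, map_one]
    ring
  simp_rw [hmul]
  rw [← coeff_binPoly n (pt * a + (1 - pt) * b) k, hps, add_pow, finset_sum_coeff]
  refine Finset.sum_congr rfl (fun x _ => ?_)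
  have : (C pt * Pa) ^ x * (C (1 - pt) * Pb) ^ (n - x) * (n.choose x : Polynomial ℝ)
      = C ((n.choose x : ℝ) * pt ^ x * (1 - pt) ^ (n - x)) * (Pa ^ x * Pb ^ (n - x)) := by
    rw [mul_pow, mul_pow, ← C_pow, ← C_pow, ← C_eq_natCast]
    rw [C_mul, C_mul]
    ring
  rw [this, coeff_C_mul, binomialPMF]

/-- **Reverse step with attrition preserves binomial marginals.**
Let `n ∈ ℕ`, `p_t, p_s ∈ [0,1]` with `p_t < 1`, `σ ∈ [0,1]`, and
`β = (p_s - (1-σ)·p_t)/(1 - p_t)` with `β ∈ [0,1]`.  If `X ~ Binomial(n, p_t)` and,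
conditionally on `X = x`, independently `N ~ Binomial(x, 1-σ)` and
`B ~ Binomial(n - x, β)`, then `N + B ~ Binomial(n, p_s)`: as probability mass
functions, for every `k`,
`Σ_x P(X=x) · Σ_j P(N=j)·P(B=k-j) = C(n,k)·p_s^k·(1-p_s)^{n-k}`. -/
theorem attrition_step_preserves_binomial_marginal
    (n : ℕ) (pt ps σ : ℝ)
    (hpt : pt ∈ Set.Icc (0 : ℝ) 1) (hps : ps ∈ Set.Icc (0 : ℝ) 1)
    (hpt1 : pt < 1) (hσ : σ ∈ Set.Icc (0 : ℝ) 1)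
    (β : ℝ) (hβdef : β = (ps - (1 - σ) * pt) / (1 - pt))
    (hβ : β ∈ Set.Icc (0 : ℝ) 1) :
    ∀ k : ℕ,
      ∑ x ∈ Finset.range (n + 1), binomialPMF n pt x *
        ∑ j ∈ Finset.range (k + 1),
          binomialPMF x (1 - σ) j * binomialPMF (n - x) β (k - j)
        = binomialPMF n ps k := by
  intro k
  rw [key n pt (1 - σ) β k]
  have hne : (1 : ℝ) - pt ≠ 0 := by linarith
  have : pt * (1 - σ) + (1 - pt) * β = ps := by
    rw [hβdef]; field_simp; ring
  rw [this]
end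

section
/- Let n ∈ ℕ and let p_t, p_s ∈ [0,1] with p_t ≤ p_s and p_t < 1. If X ~ Binomial(n, p_t) and, conditionally on X = x, B ~ Binomial(n - x, (p_s - p_t)/(1 - p_t)), then X + B ~ Binomial(n, p_s). -/
/-- **Zero-attrition reverse step preserves binomial marginals.**
Let `n ∈ ℕ` and `p_t, p_s ∈ [0,1]` with `p_t ≤ p_s` and `p_t < 1`.  If
`X ~ Binomial(n, p_t)` and, conditionally on `X = x`,
`B ~ Binomial(n - x, (p_s - p_t)/(1 - p_t))`, then `X + B ~ Binomial(n, p_s)`: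
as probability mass functions, for every `k`,
`Σ_{x=0}^{k} P(X = x)·P(B = k - x) = C(n,k)·p_s^k·(1-p_s)^{n-k}`. -/
theorem pure_birth_step_preserves_binomial_marginal
    (n : ℕ) (pt ps : ℝ)
    (hpt : pt ∈ Set.Icc (0 : ℝ) 1) (hps : ps ∈ Set.Icc (0 : ℝ) 1)
    (hpts : pt ≤ ps) (hpt1 : pt < 1) :
    ∀ k : ℕ,
      ∑ x ∈ Finset.range (k + 1),
          binomialPMF n pt x * binomialPMF (n - x) ((ps - pt) / (1 - pt)) (k - x)
        = binomialPMF n ps k := by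
  intro k
  have h1pt : (0:ℝ) < 1 - pt := by linarith
  have hne : (1:ℝ) - pt ≠ 0 := ne_of_gt h1pt
  -- termwise rewrite
  have hterm : ∀ x ∈ Finset.range (k + 1),
      binomialPMF n pt x * binomialPMF (n - x) ((ps - pt) / (1 - pt)) (k - x)
        = (n.choose k : ℝ) * (1 - ps) ^ (n - k) *
            ((k.choose x : ℝ) * pt ^ x * (ps - pt) ^ (k - x)) := by
    intro x hx
    have hxk : x ≤ k := Nat.lt_succ_iff.mp (Finset.mem_range.mp hx)
    by_cases hxn : x ≤ n
    · by_cases hkn : k ≤ n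
      · -- main case: x ≤ k ≤ n
        have hchoose : (n.choose x : ℝ) * ((n - x).choose (k - x) : ℝ)
            = (n.choose k : ℝ) * (k.choose x : ℝ) := by
          exact_mod_cast congrArg (Nat.cast (R := ℝ)) (Nat.choose_mul (n := n) hxk).symm
        have h1mb : 1 - (ps - pt) / (1 - pt) = (1 - ps) / (1 - pt) := by
          field_simp; ring
        have hsub : (n - x) - (k - x) = n - k := by omega
        unfold binomialPMF
        rw [hsub, h1mb, div_pow, div_pow]
        have hpow : (1 - pt) ^ (n - x) = (1 - pt) ^ (k - x) * (1 - pt) ^ (n - k) := by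
          rw [← pow_add]; congr 1; omega
        field_simp [hpow]
        linear_combination (pt ^ x * (1 - pt) ^ (k - x) * (1 - pt) ^ (n - k) *
          (ps - pt) ^ (k - x) * (1 - ps) ^ (n - k)) * hchoose
          + ((n.choose x : ℝ) * pt ^ x * ((n - x).choose (k - x) : ℝ) * (1 - ps) ^ (n - k) * (ps - pt) ^ (k - x)) * hpow
      · -- k > n : both sides vanish
        have h1 : ((n - x).choose (k - x) : ℝ) = 0 := by
          rw [Nat.choose_eq_zero_of_lt (by omega)]; simp
        have h2 : (n.choose k : ℝ) = 0 := by
          rw [Nat.choose_eq_zero_of_lt (by omega)]; simp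
        unfold binomialPMF; rw [h1, h2]; ring
    · -- x > n : both sides vanish
      have h1 : (n.choose x : ℝ) = 0 := by
        rw [Nat.choose_eq_zero_of_lt (by omega)]; simp
      have h2 : (n.choose k : ℝ) = 0 := by
        rw [Nat.choose_eq_zero_of_lt (by omega)]; simp
      unfold binomialPMF; rw [h1, h2]; ring
  rw [Finset.sum_congr rfl hterm, ← Finset.mul_sum]
  have hbin : ∑ x ∈ Finset.range (k + 1),
      (k.choose x : ℝ) * pt ^ x * (ps - pt) ^ (k - x) = ps ^ k := by
    have := add_pow pt (ps - pt) k
    simp only [add_sub_cancel] at this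
    rw [this]
    exact Finset.sum_congr rfl (fun x _ => by ring)
  rw [hbin]
  unfold binomialPMF; ring
end
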